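/- Let E ∈ M_r(ℂ) satisfy E² = I (E is similar to a self-adjoint unitary), with polar decomposition E = RL where L = |E| and R unitary. Then R = R* = R⁻¹ is a unitary reflection, RL = L⁻¹R, and for every λ ∈ (0,1) and n ∈ ℕ, the n-th iterated λ-Aluthge transform is Δ_λⁿ(E) = R L^{(1−2λ)ⁿ}; consequently Δ_λⁿ(E) → R as n → ∞. -/

import Mathlib

set_option maxHeartbeats 1000000


open Matrix
open scoped ComplexOrder

/-- `|T| = (Tᴴ T)^{1/2}`, the positive semidefinite absolute value of a matrix. -/
noncomputable def matAbs {n : Type*} [Fintype n] [DecidableEq n]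
    (T : Matrix n n ℂ) : Matrix n n ℂ :=
  ((Matrix.posSemidef_conjTranspose_mul_self T).1.eigenvectorUnitary : Matrix n n ℂ) *
    diagonal ((↑) ∘ Real.sqrt ∘ (Matrix.posSemidef_conjTranspose_mul_self T).1.eigenvalues) *
    (star ((Matrix.posSemidef_conjTranspose_mul_self T).1.eigenvectorUnitary : Matrix n n ℂ))

/-- Real power `P^l` of a Hermitian matrix, via the functional calculus
(junk value `0` if `P` is not Hermitian). -/
noncomputable def hermPow {n : Type*} [Fintype n] [DecidableEq n]
    (P : Matrix n n ℂ) (l : ℝ) : Matrix n n ℂ :=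
  if h : P.IsHermitian then h.cfc (fun x : ℝ => x ^ l) else 0

/-- The λ-Aluthge transform `|T|^λ U |T|^{1-λ}`, where `U` is a polar part of `T`. -/
noncomputable def aluthge {n : Type*} [Fintype n] [DecidableEq n]
    (l : ℝ) (U T : Matrix n n ℂ) : Matrix n n ℂ :=
  hermPow (matAbs T) l * U * hermPow (matAbs T) (1 - l)

section Aux

variable {r : ℕ}

lemma contOn_of_finite {s : Set ℝ} (hs : s.Finite) (f : ℝ → ℝ) : ContinuousOn f s := by
  rw [continuousOn_iff_continuous_restrict]
  have : Finite s := hs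
  exact continuous_of_discreteTopology

lemma contOn_spec (f : ℝ → ℝ) (A : Matrix (Fin r) (Fin r) ℂ) :
    ContinuousOn f (spectrum ℝ A) :=
  contOn_of_finite (Matrix.finite_real_spectrum (A := A)) f

variable {A : Matrix (Fin r) (Fin r) ℂ}

lemma hermPow_eq (hA : A.IsHermitian) (s : ℝ) :
    hermPow A s = cfc (fun x : ℝ => x ^ s) A := by
  rw [hermPow, dif_pos hA]
  exact (hA.cfc_eq _).symm

lemma hermPow_isHermitian (s : ℝ) : (hermPow A s).IsHermitian := by
  by_cases hA : A.IsHermitian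
  · rw [hermPow_eq hA]
    exact (cfc_predicate (fun x : ℝ => x ^ s) A : IsSelfAdjoint _)
  · rw [hermPow, dif_neg hA]
    exact isHermitian_zero

lemma hermPow_zero (hA : A.IsHermitian) : hermPow A 0 = 1 := by
  rw [hermPow_eq hA]
  have h1 : cfc (fun x : ℝ => x ^ (0 : ℝ)) A = cfc (fun _ : ℝ => (1 : ℝ)) A :=
    cfc_congr fun x _ => Real.rpow_zero x
  rw [h1]
  exact cfc_const_one ℝ A hA

lemma hermPow_one (hA : A.IsHermitian) : hermPow A 1 = A := by
  rw [hermPow_eq hA]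
  have h1 : cfc (fun x : ℝ => x ^ (1 : ℝ)) A = cfc (fun x : ℝ => x) A :=
    cfc_congr fun x _ => Real.rpow_one x
  rw [h1]
  exact cfc_id' ℝ A hA

lemma hermPow_mul (hA : A.IsHermitian) (hpos : ∀ x ∈ spectrum ℝ A, 0 < x) (s t : ℝ) :
    hermPow A s * hermPow A t = hermPow A (s + t) := by
  rw [hermPow_eq hA, hermPow_eq hA, hermPow_eq hA,
    ← cfc_mul _ _ A (contOn_spec _ A) (contOn_spec _ A)]
  exact cfc_congr fun x hx => (Real.rpow_add (hpos x hx) s t).symm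

lemma hermPow_comp (hA : A.IsHermitian) (hpos : ∀ x ∈ spectrum ℝ A, 0 < x) (s t : ℝ) :
    hermPow (hermPow A s) t = hermPow A (s * t) := by
  have h1 : hermPow (hermPow A s) t
      = cfc (fun x : ℝ => x ^ t) (cfc (fun x : ℝ => x ^ s) A) := by
    rw [hermPow_eq (hermPow_isHermitian s), hermPow_eq hA]
  have h2 := cfc_comp (fun x : ℝ => x ^ t) (fun x : ℝ => x ^ s) A hA
      (contOn_of_finite ((Matrix.finite_real_spectrum (A := A)).image _) _) (contOn_spec _ A)
  rw [h1, ← h2, hermPow_eq hA]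
  exact cfc_congr fun x hx => by
    show (x ^ s) ^ t = x ^ (s * t)
    rw [← Real.rpow_mul (hpos x hx).le]

/-- Conjugation by a unitary as a star algebra homomorphism. -/
noncomputable def conjHom (R : Matrix (Fin r) (Fin r) ℂ)
    (hR : R ∈ Matrix.unitaryGroup (Fin r) ℂ) :
    Matrix (Fin r) (Fin r) ℂ →⋆ₐ[ℂ] Matrix (Fin r) (Fin r) ℂ where
  toFun X := R * X * Rᴴ
  map_one' := by
    have h : R * Rᴴ = 1 := by
      simpa [star_eq_conjTranspose] using mem_unitaryGroup_iff.mp hR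
    show R * 1 * Rᴴ = 1
    rw [mul_one, h]
  map_mul' X Y := by
    have h : Rᴴ * R = 1 := by
      simpa [star_eq_conjTranspose] using mem_unitaryGroup_iff'.mp hR
    have h' : ∀ Z : Matrix (Fin r) (Fin r) ℂ, Rᴴ * (R * Z) = Z := fun Z => by
      rw [← mul_assoc, h, one_mul]
    show R * (X * Y) * Rᴴ = (R * X * Rᴴ) * (R * Y * Rᴴ)
    simp only [mul_assoc, h']
  map_zero' := by simp
  map_add' X Y := by
    show R * (X + Y) * Rᴴ = R * X * Rᴴ + R * Y * Rᴴ
    simp [mul_add, add_mul]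
  commutes' c := by
    have h : R * Rᴴ = 1 := by
      simpa [star_eq_conjTranspose] using mem_unitaryGroup_iff.mp hR
    show R * (algebraMap ℂ (Matrix (Fin r) (Fin r) ℂ) c) * Rᴴ = _
    simp [Algebra.algebraMap_eq_smul_one, h]
  map_star' X := by
    show R * (star X) * Rᴴ = star (R * X * Rᴴ)
    simp [star_eq_conjTranspose, conjTranspose_mul, mul_assoc]

lemma conjHom_cont (R : Matrix (Fin r) (Fin r) ℂ)
    (hR : R ∈ Matrix.unitaryGroup (Fin r) ℂ) : Continuous (conjHom R hR) := by
  show Continuous fun X : Matrix (Fin r) (Fin r) ℂ => R * X * Rᴴ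
  exact (continuous_const.matrix_mul continuous_id).matrix_mul continuous_const

lemma conj_isHermitian (hA : A.IsHermitian) {R : Matrix (Fin r) (Fin r) ℂ} :
    (R * A * Rᴴ).IsHermitian := by
  show (R * A * Rᴴ)ᴴ = R * A * Rᴴ
  rw [conjTranspose_mul, conjTranspose_mul, conjTranspose_conjTranspose, hA.eq, mul_assoc]

lemma conj_hermPow (hA : A.IsHermitian) (s : ℝ) (R : Matrix (Fin r) (Fin r) ℂ)
    (hR : R ∈ Matrix.unitaryGroup (Fin r) ℂ) :
    R * hermPow A s * Rᴴ = hermPow (R * A * Rᴴ) s := by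
  have hφA : IsSelfAdjoint ((conjHom R hR) A) := (conj_isHermitian hA : (R * A * Rᴴ).IsHermitian)
  have h := StarAlgHom.map_cfc (conjHom R hR) (fun x : ℝ => x ^ s) A
    (contOn_spec _ A) (conjHom_cont R hR) hA hφA
  rw [hermPow_eq hA, hermPow_eq (conj_isHermitian hA)]
  exact h

lemma matAbs_eq_cfc (T : Matrix (Fin r) (Fin r) ℂ) :
    matAbs T = cfc Real.sqrt (Tᴴ * T) := by
  rw [(Matrix.posSemidef_conjTranspose_mul_self T).1.cfc_eq]
  rfl

lemma spec_nonneg_of_psd {P : Matrix (Fin r) (Fin r) ℂ} (hP : P.PosSemidef) :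
    ∀ x ∈ spectrum ℝ P, 0 ≤ x := by
  intro x hx
  rw [hP.1.spectrum_real_eq_range_eigenvalues] at hx
  obtain ⟨i, rfl⟩ := hx
  exact hP.eigenvalues_nonneg i

lemma matAbs_psd (T : Matrix (Fin r) (Fin r) ℂ) : (matAbs T).PosSemidef := by
  set M := cfc (fun x : ℝ => Real.sqrt (Real.sqrt x)) (Tᴴ * T) with hMdef
  have hM : M.IsHermitian := (cfc_predicate _ _ : IsSelfAdjoint M)
  have : matAbs T = Mᴴ * M := by
    rw [hM.eq, matAbs_eq_cfc, hMdef, ← cfc_mul _ _ _ (contOn_spec _ _) (contOn_spec _ _)]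
    exact cfc_congr fun x _ => (Real.mul_self_sqrt (Real.sqrt_nonneg x)).symm
  rw [this]
  exact Matrix.posSemidef_conjTranspose_mul_self M

lemma matAbs_mul_self (T : Matrix (Fin r) (Fin r) ℂ) : matAbs T * matAbs T = Tᴴ * T := by
  have hA := Matrix.posSemidef_conjTranspose_mul_self T
  rw [matAbs_eq_cfc, ← cfc_mul _ _ _ (contOn_spec _ _) (contOn_spec _ _)]
  have h : cfc (fun x : ℝ => Real.sqrt x * Real.sqrt x) (Tᴴ * T)
      = cfc (fun x : ℝ => x) (Tᴴ * T) :=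
    cfc_congr fun x hx => Real.mul_self_sqrt (spec_nonneg_of_psd hA x hx)
  rw [h]
  exact cfc_id' ℝ _ hA.1

lemma matAbs_eq_of_sq (T P : Matrix (Fin r) (Fin r) ℂ) (hP : P.PosSemidef)
    (h : P ^ 2 = Tᴴ * T) : matAbs T = P := by
  rw [matAbs_eq_cfc, ← h, ← cfc_pow_id (R := ℝ) (p := IsSelfAdjoint) P 2 hP.1]
  rw [← cfc_comp (p := IsSelfAdjoint) Real.sqrt (fun x : ℝ => x ^ 2) P hP.1
    (contOn_of_finite ((Matrix.finite_real_spectrum (A := P)).image _) _) (contOn_spec _ P)]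
  refine (cfc_congr (g := fun x : ℝ => x) ?_).trans (cfc_id' ℝ P hP.1)
  intro x hx
  exact Real.sqrt_sq (spec_nonneg_of_psd hP x hx)

end Aux

/-- if `E² = I` with polar decomposition `E = R L` (`L = |E|`, `R` unitary),
then `R` is a unitary reflection, `R L = L⁻¹ R`, the iterated λ-Aluthge transforms are
`Δ_λⁿ(E) = R L^{(1−2λ)ⁿ}`, and `Δ_λⁿ(E) → R`. -/
theorem aluthge_iterates_of_reflection {r : ℕ} (l : ℝ) (hl : l ∈ Set.Ioo (0 : ℝ) 1)
    (E R : Matrix (Fin r) (Fin r) ℂ) (hE2 : E * E = 1)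
    (hR : R ∈ Matrix.unitaryGroup (Fin r) ℂ) (hpolar : E = R * matAbs E) :
    Rᴴ = R ∧ R * R = 1 ∧ R * matAbs E = (matAbs E)⁻¹ * R ∧
    R * hermPow (matAbs E) ((1 - 2 * l) ^ (0 : ℕ)) = E ∧
    (∀ n : ℕ,
      matAbs (R * hermPow (matAbs E) ((1 - 2 * l) ^ n))
          = hermPow (matAbs E) ((1 - 2 * l) ^ n) ∧
      aluthge l R (R * hermPow (matAbs E) ((1 - 2 * l) ^ n))
          = R * hermPow (matAbs E) ((1 - 2 * l) ^ (n + 1))) ∧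
    Filter.Tendsto (fun n : ℕ => R * hermPow (matAbs E) ((1 - 2 * l) ^ n))
      Filter.atTop (nhds R) := by
  set L := matAbs E with hLdef
  have hLpsd : L.PosSemidef := matAbs_psd E
  have hLh : L.IsHermitian := hLpsd.1
  have hLL : L * L = Eᴴ * E := matAbs_mul_self E
  -- invertibility of L
  have hEunit : IsUnit E.det := by
    have : E.det * E.det = 1 := by rw [← Matrix.det_mul, hE2, Matrix.det_one]
    exact IsUnit.of_mul_eq_one _ this
  have hLunit : IsUnit L := by
    have hdet : L.det * L.det = Eᴴ.det * E.det := by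
      rw [← Matrix.det_mul, ← Matrix.det_mul, hLL]
    have hEH : IsUnit Eᴴ.det := by
      rw [Matrix.det_conjTranspose]
      exact hEunit.star
    have : IsUnit (L.det * L.det) := hdet ▸ hEH.mul hEunit
    exact (Matrix.isUnit_iff_isUnit_det L).mpr (isUnit_of_mul_isUnit_left this)
  have hpos : ∀ x ∈ spectrum ℝ L, 0 < x := by
    intro x hx
    have h0 : x ≠ 0 := by
      intro h
      exact (spectrum.zero_notMem_iff ℝ).mpr hLunit (h ▸ hx)
    rw [hLh.spectrum_real_eq_range_eigenvalues] at hx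
    obtain ⟨i, rfl⟩ := hx
    exact lt_of_le_of_ne (hLpsd.eigenvalues_nonneg i) (Ne.symm h0)
  -- unitary relations
  have hRR : R * Rᴴ = 1 := by
    simpa [Matrix.star_eq_conjTranspose] using Matrix.mem_unitaryGroup_iff.mp hR
  have hRR' : Rᴴ * R = 1 := by
    simpa [Matrix.star_eq_conjTranspose] using Matrix.mem_unitaryGroup_iff'.mp hR
  -- basic algebra: Rᴴ = L R L
  have h1 : R * L * (R * L) = 1 := by rw [← hpolar]; exact hE2
  have step1 : L * R * L = Rᴴ := by
    have h := congrArg (fun X => Rᴴ * X) h1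
    simp only [mul_one] at h
    calc L * R * L = Rᴴ * R * (L * R * L) := by rw [hRR', one_mul]
    _ = Rᴴ * (R * L * (R * L)) := by simp only [mul_assoc]
    _ = Rᴴ := h
  -- M := L², N := L⁻², and R = M R M
  set M : Matrix (Fin r) (Fin r) ℂ := hermPow L 2 with hMdef
  set N : Matrix (Fin r) (Fin r) ℂ := hermPow L (-2) with hNdef
  have hM : M = L * L := by
    have h := hermPow_mul hLh hpos 1 1
    rw [hermPow_one hLh] at h
    norm_num at h
    rw [hMdef]
    exact h.symm
  have hNM : N * M = 1 := by
    rw [hNdef, hMdef, hermPow_mul hLh hpos]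
    norm_num
    exact hermPow_zero hLh
  have hRMRM : R = M * R * M := by
    have h2 : R = (L * R * L)ᴴ := by rw [step1, conjTranspose_conjTranspose]
    rw [conjTranspose_mul, conjTranspose_mul, hLh.eq] at h2
    -- h2 : R = L * (Rᴴ * L) (up to assoc)
    rw [hM]
    calc R = Lᴴ * (Rᴴ * Lᴴ) := by rw [hLh.eq]; simpa [mul_assoc] using h2
    _ = L * ((L * R * L) * L) := by rw [hLh.eq, ← step1]
    _ = L * L * R * (L * L) := by simp only [mul_assoc]
  have hRMR : R * M * Rᴴ = N := by
    have h3 : N * R = R * M := by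
      calc N * R = N * (M * R * M) := by rw [← hRMRM]
      _ = (N * M) * (R * M) := by simp only [mul_assoc]
      _ = R * M := by rw [hNM, one_mul]
    calc R * M * Rᴴ = N * R * Rᴴ := by rw [h3]
    _ = N * (R * Rᴴ) := by rw [mul_assoc]
    _ = N := by rw [hRR, mul_one]
  -- the commutation relation
  have hMh : M.IsHermitian := hermPow_isHermitian 2
  have comm : ∀ s : ℝ, R * hermPow L s * Rᴴ = hermPow L (-s) := by
    intro s
    have e1 : hermPow L s = hermPow M (s / 2) := by
      have e0 : (2 : ℝ) * (s / 2) = s := by ring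
      rw [hMdef, hermPow_comp hLh hpos, e0]
    have e2 : hermPow (R * M * Rᴴ) (s / 2) = hermPow L (-s) := by
      have e0 : (-2 : ℝ) * (s / 2) = -s := by ring
      rw [hRMR, hNdef, hermPow_comp hLh hpos, e0]
    rw [e1, conj_hermPow hMh (s / 2) R hR, e2]
  have comm' : ∀ s : ℝ, R * hermPow L s = hermPow L (-s) * R := by
    intro s
    calc R * hermPow L s = R * hermPow L s * (Rᴴ * R) := by rw [hRR', mul_one]
    _ = (R * hermPow L s * Rᴴ) * R := by simp only [mul_assoc]
    _ = hermPow L (-s) * R := by rw [comm s]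
  have comm'' : ∀ s : ℝ, hermPow L s * R = R * hermPow L (-s) := by
    intro s
    have := comm' (-s)
    rw [neg_neg] at this
    exact this.symm
  -- claim 1 : Rᴴ = R
  have claim1 : Rᴴ = R := by
    have hRL : R * L = hermPow L (-1) * R := by
      have := comm' 1
      rwa [hermPow_one hLh] at this
    calc Rᴴ = L * R * L := step1.symm
    _ = L * (R * L) := by rw [mul_assoc]
    _ = L * (hermPow L (-1) * R) := by rw [hRL]
    _ = (hermPow L 1 * hermPow L (-1)) * R := by rw [hermPow_one hLh, mul_assoc]
    _ = hermPow L 0 * R := by rw [hermPow_mul hLh hpos]; norm_num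
    _ = R := by rw [hermPow_zero hLh, one_mul]
  -- claim 2
  have claim2 : R * R = 1 := by nth_rewrite 1 [← claim1]; exact hRR'
  -- inverse of L
  have hLinvPow : L⁻¹ = hermPow L (-1) := by
    refine Matrix.inv_eq_left_inv ?_
    have h := hermPow_mul hLh hpos (-1) 1
    rw [hermPow_one hLh] at h
    rw [h]
    norm_num
    exact hermPow_zero hLh
  have claim3 : R * L = L⁻¹ * R := by
    rw [hLinvPow]
    have := comm' 1
    rwa [hermPow_one hLh] at this
  -- claim 4
  have claim4 : R * hermPow L ((1 - 2 * l) ^ (0 : ℕ)) = E := by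
    rw [pow_zero, hermPow_one hLh, ← hpolar]
  -- positivity of hermPow powers
  have hPowPsd : ∀ a : ℝ, (hermPow L a).PosSemidef := by
    intro a
    have h : hermPow L (a / 2) * hermPow L (a / 2) = hermPow L a := by
      have e0 : a / 2 + a / 2 = a := by ring
      rw [hermPow_mul hLh hpos, e0]
    have h2 : (hermPow L (a / 2))ᴴ * hermPow L (a / 2) = hermPow L a := by
      rw [(hermPow_isHermitian (a / 2)).eq]
      exact h
    rw [← h2]
    exact Matrix.posSemidef_conjTranspose_mul_self _
  -- claim 5
  have claim5 : ∀ n : ℕ,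
      matAbs (R * hermPow L ((1 - 2 * l) ^ n)) = hermPow L ((1 - 2 * l) ^ n) ∧
      aluthge l R (R * hermPow L ((1 - 2 * l) ^ n))
        = R * hermPow L ((1 - 2 * l) ^ (n + 1)) := by
    intro n
    set a : ℝ := (1 - 2 * l) ^ n with hadef
    have habs : matAbs (R * hermPow L a) = hermPow L a := by
      have hsq : (hermPow L a) ^ 2 = (R * hermPow L a)ᴴ * (R * hermPow L a) := by
        rw [conjTranspose_mul, (hermPow_isHermitian a).eq]
        calc (hermPow L a) ^ 2 = hermPow L a * hermPow L a := pow_two _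
        _ = hermPow L a * (Rᴴ * R) * hermPow L a := by rw [hRR', mul_one]
        _ = hermPow L a * Rᴴ * (R * hermPow L a) := by simp only [mul_assoc]
      exact matAbs_eq_of_sq (R * hermPow L a) (hermPow L a) (hPowPsd a) hsq
    refine ⟨habs, ?_⟩
    rw [aluthge, habs]
    have e1 : hermPow (hermPow L a) l = hermPow L (a * l) := hermPow_comp hLh hpos a l
    have e2 : hermPow (hermPow L a) (1 - l) = hermPow L (a * (1 - l)) :=
      hermPow_comp hLh hpos a (1 - l)
    rw [e1, e2]
    calc hermPow L (a * l) * R * hermPow L (a * (1 - l))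
        = R * hermPow L (-(a * l)) * hermPow L (a * (1 - l)) := by rw [comm'' (a * l)]
    _ = R * (hermPow L (-(a * l)) * hermPow L (a * (1 - l))) := by simp only [mul_assoc]
    _ = R * hermPow L (-(a * l) + a * (1 - l)) := by rw [hermPow_mul hLh hpos]
    _ = R * hermPow L ((1 - 2 * l) ^ (n + 1)) := by
        have e0 : -(a * l) + a * (1 - l) = (1 - 2 * l) ^ (n + 1) := by
          rw [hadef, pow_succ]; ring
        rw [e0]
  -- claim 6 : convergence
  have claim6 : Filter.Tendsto (fun n : ℕ => R * hermPow L ((1 - 2 * l) ^ n))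
      Filter.atTop (nhds R) := by
    have habs1 : |1 - 2 * l| < 1 := by
      rw [abs_lt]
      constructor <;> [linarith [hl.2]; linarith [hl.1]]
    have ht0 : Filter.Tendsto (fun n : ℕ => (1 - 2 * l) ^ n) Filter.atTop (nhds 0) :=
      tendsto_pow_atTop_nhds_zero_iff.mpr habs1
    have gcont : Continuous fun s : ℝ => hermPow L s := by
      have hrepr : (fun s : ℝ => hermPow L s) = fun s : ℝ =>
          (hLh.eigenvectorUnitary : Matrix (Fin r) (Fin r) ℂ) *
            Matrix.diagonal (fun i => (Complex.ofReal (hLh.eigenvalues i ^ s))) *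
            star (hLh.eigenvectorUnitary : Matrix (Fin r) (Fin r) ℂ) := by
        funext s
        rw [hermPow, dif_pos hLh, Matrix.IsHermitian.cfc]
        rfl
      rw [hrepr]
      refine Continuous.matrix_mul (Continuous.matrix_mul continuous_const ?_) continuous_const
      refine Continuous.matrix_diagonal ?_
      refine continuous_pi fun i => ?_
      have hp : 0 < hLh.eigenvalues i :=
        hpos _ (hLh.eigenvalues_mem_spectrum_real i)
      refine Complex.continuous_ofReal.comp ?_
      have hcont : Continuous fun s : ℝ => Real.exp (Real.log (hLh.eigenvalues i) * s) := by
        fun_prop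
      exact hcont.congr fun s => (Real.rpow_def_of_pos hp s).symm
    have h2 : Filter.Tendsto (fun n : ℕ => hermPow L ((1 - 2 * l) ^ n))
        Filter.atTop (nhds (hermPow L 0)) := (gcont.tendsto 0).comp ht0
    rw [hermPow_zero hLh] at h2
    have h3 : Continuous fun X : Matrix (Fin r) (Fin r) ℂ => R * X :=
      continuous_const.matrix_mul continuous_id
    have h4 := (h3.tendsto 1).comp h2
    rw [mul_one] at h4
    exact h4
  exact ⟨claim1, claim2, claim3, claim4, claim5, claim6⟩
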